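/- Let E be a finite linearly ordered set and let S_1, S_2 ⊆ E with S_1 ◁ S_2 and S_2 ◁ S_1, where S ◁ T means S is an initial segment of S ∪ T and (S \ {max S}) ∪ T ⊊ S ∪ T. Then a contradiction follows; i.e. the relation ◁ is asymmetric. -/
import Mathlib


/-- `S ◁ T`: `S` is nonempty, `S` is an initial segment of `S ∪ T` (every element of
`S ∪ T` that is `≤ max S` lies in `S`), and `(S \ {max S}) ∪ T ⊊ S ∪ T`. -/
def Tri {E : Type*} [LinearOrder E] (S T : Finset E) : Prop :=
  S.Nonempty ∧ ∀ m ∈ S, (∀ y ∈ S, y ≤ m) →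
    (∀ x ∈ S ∪ T, x ≤ m → x ∈ S) ∧ S.erase m ∪ T ⊂ S ∪ T

/-- The relation `◁` is asymmetric: `S₁ ◁ S₂` and `S₂ ◁ S₁` yield a contradiction. -/
theorem stmt7 {E : Type*} [Fintype E] [LinearOrder E] (S₁ S₂ : Finset E)
    (h₁ : S₁.Nonempty) (h₂ : S₂.Nonempty)
    (h12 : Tri S₁ S₂) (h21 : Tri S₂ S₁) : False := by
  set m₁ := S₁.max' h₁ with hm₁
  set m₂ := S₂.max' h₂ with hm₂
  obtain ⟨-, H12⟩ := h12
  obtain ⟨-, H21⟩ := h21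
  obtain ⟨hinit₁, hss₁⟩ := H12 m₁ (S₁.max'_mem h₁) (fun y hy => S₁.le_max' y hy)
  obtain ⟨hinit₂, hss₂⟩ := H21 m₂ (S₂.max'_mem h₂) (fun y hy => S₂.le_max' y hy)
  have hm₁S₂ : m₁ ∉ S₂ := by
    intro hmem
    apply hss₁.2
    intro x hx
    rcases Finset.mem_union.1 hx with hx | hx
    · rcases eq_or_ne x m₁ with rfl | hne
      · exact Finset.mem_union_right _ hmem
      · exact Finset.mem_union_left _ (Finset.mem_erase.2 ⟨hne, hx⟩)
    · exact Finset.mem_union_right _ hx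
  have hm₂S₁ : m₂ ∉ S₁ := by
    intro hmem
    apply hss₂.2
    intro x hx
    rcases Finset.mem_union.1 hx with hx | hx
    · rcases eq_or_ne x m₂ with rfl | hne
      · exact Finset.mem_union_right _ hmem
      · exact Finset.mem_union_left _ (Finset.mem_erase.2 ⟨hne, hx⟩)
    · exact Finset.mem_union_right _ hx
  rcases le_total m₁ m₂ with h | h
  · exact hm₁S₂ (hinit₂ m₁ (Finset.mem_union_right _ (S₁.max'_mem h₁)) h)
  · exact hm₂S₁ (hinit₁ m₂ (Finset.mem_union_right _ (S₂.max'_mem h₂)) h)
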